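/- Let A be a set, let g : A × A → A be a binary operation, and define the binary operation h on A × A by h((x₁,y₁),(x₂,y₂)) = (g(x₁,y₁), g(x₂,y₂)). If (A, g) is a Ramsey algebra, then (A × A, h) is a Ramsey algebra. -/

import Mathlib

open Function Set

universe u v w

/-- Terms of a purely functional first-order language whose function symbols
of arity `n` form the type `F n`, with variables indexed by `ℕ`. -/
inductive Tm (F : ℕ → Type u) : Type u
  | var : ℕ → Tm F
  | func : {n : ℕ} → F n → (Fin n → Tm F) → Tm F

namespace Tm

variable {F : ℕ → Type u} {A : Type v} {β : Type w}

/-- The list of (indices of) variables occurring in a term, from left to right. -/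
def varList : Tm F → List ℕ
  | .var i => [i]
  | .func (n := n) _ ts => (List.finRange n).flatMap fun i => (ts i).varList

/-- A term is *orderly* if the indices of the variables occurring in it,
read from left to right, are strictly increasing. -/
def Orderly (t : Tm F) : Prop := t.varList.Chain' (· < ·)

/-- `TermLT s t` iff the index of the last variable of `s` is less than the
index of the first variable of `t`. -/
def TermLT (s t : Tm F) : Prop :=
  ∃ i j, s.varList.getLast? = some i ∧ t.varList.head? = some j ∧ i < j

/-- An infinite sequence of orderly terms is *admissible* iff it is increasing
with respect to `TermLT`. -/
def Admissible (ts : ℕ → Tm F) : Prop :=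
  (∀ i, (ts i).Orderly) ∧ ∀ i, TermLT (ts i) (ts (i + 1))

/-- `s.subst σ` replaces each variable `vᵢ` in `s` by `σ i`. -/
def subst (σ : ℕ → Tm F) : Tm F → Tm F
  | .var i => σ i
  | .func f ts => .func f fun i => (ts i).subst σ

/-- Interpretation of a term in a structure with underlying set `A` whose
interpretation of the function symbols is `I`, under the assignment `a`. -/
def realize (I : ∀ n, F n → (Fin n → A) → A) (a : ℕ → A) : Tm F → A
  | .var i => a i
  | .func (n := n) f ts => I n f fun i => (ts i).realize I a

end Tm

section General

variable {F : ℕ → Type u} {A : Type v} {β : Type w}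

/-- `b` is a reduction of `a` (with respect to the algebra `(A, I)`). -/
def SeqReduction (I : ∀ n, F n → (Fin n → A) → A) (b a : ℕ → A) : Prop :=
  ∃ ts : ℕ → Tm F, Tm.Admissible ts ∧ ∀ i, b i = (ts i).realize I a

/-- The set of finite reductions of `a`. -/
def FR (I : ∀ n, F n → (Fin n → A) → A) (a : ℕ → A) : Set A :=
  { x | ∃ t : Tm F, t.Orderly ∧ x = t.realize I a }

/-- `(A, I)` is a Ramsey algebra. -/
def RamseyAlg (I : ∀ n, F n → (Fin n → A) → A) : Prop :=
  ∀ (a : ℕ → A) (X : Set A),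
    ∃ b, SeqReduction I b a ∧ (FR I b ⊆ X ∨ FR I b ∩ X = ∅)

/-- `(A, I)` is Ramsey below `a`. -/
def RamseyBelow (I : ∀ n, F n → (Fin n → A) → A) (a : ℕ → A) : Prop :=
  ∀ b, SeqReduction I b a → ∀ X : Set A,
    ∃ c, SeqReduction I c b ∧ (FR I c ⊆ X ∨ FR I c ∩ X = ∅)

/-- An increasing tuple `t₁ < t₂ < ⋯ < tₙ` of orderly terms. -/
def OrdTuple {n : ℕ} (t : Fin n → Tm F) : Prop :=
  (∀ i, (t i).Orderly) ∧ ∀ i j : Fin n, i < j → Tm.TermLT (t i) (t j)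

/-- `𝒜` (as a function on orderly terms) is an orderly algebra. -/
def IsOrderlyAlg (𝒜 : Tm F → β) : Prop :=
  ∀ (n : ℕ) (f : F n) (t t' : Fin n → Tm F), OrdTuple t → OrdTuple t' →
    (∀ k, 𝒜 (t k) = 𝒜 (t' k)) → 𝒜 (.func f t) = 𝒜 (.func f t')

/-- The universe of an orderly algebra: its range on orderly terms. -/
def OAUniv (𝒜 : Tm F → β) : Set β := 𝒜 '' { t | t.Orderly }

/-- `ℬ` is a reduction of the orderly algebra `𝒜` (as functions on orderly terms). -/
def OAReduction (ℬ 𝒜 : Tm F → β) : Prop :=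
  ∃ ts : ℕ → Tm F, Tm.Admissible ts ∧ ∀ s : Tm F, s.Orderly → ℬ s = 𝒜 (s.subst ts)

/-- `ℬ` is homogeneous for `X`. -/
def Homog (ℬ : Tm F → β) (X : Set β) : Prop :=
  OAUniv ℬ ⊆ X ∨ OAUniv ℬ ∩ X = ∅

/-- An orderly algebra is weakly Ramsey. -/
def WeaklyRamseyOA (𝒜 : Tm F → β) : Prop :=
  ∀ X ⊆ OAUniv 𝒜, ∃ ℬ, OAReduction ℬ 𝒜 ∧ Homog ℬ X

/-- An orderly algebra is Ramsey. -/
def RamseyOA (𝒜 : Tm F → β) : Prop :=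
  ∀ ℬ, OAReduction ℬ 𝒜 → ∀ X ⊆ OAUniv 𝒜, ∃ 𝒞, OAReduction 𝒞 ℬ ∧ Homog 𝒞 X

/-- The orderly algebra induced from the algebra `(A, I)` by the sequence `a`. -/
def inducedOA (I : ∀ n, F n → (Fin n → A) → A) (a : ℕ → A) : Tm F → A :=
  fun t => t.realize I a

/-- `[FR(c)]ⁿ_<` : increasing `n`-tuples of finite reductions of `c`. -/
def FRtuple (I : ∀ n, F n → (Fin n → A) → A) (n : ℕ) (c : ℕ → A) : Set (Fin n → A) :=
  { x | ∃ t : Fin n → Tm F, OrdTuple t ∧ ∀ i, x i = (t i).realize I c }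

/-- `‖𝒞‖ⁿ_<` for an orderly algebra `𝒞`. -/
def OATuple (n : ℕ) (𝒞 : Tm F → β) : Set (Fin n → β) :=
  { x | ∃ t : Fin n → Tm F, OrdTuple t ∧ ∀ i, x i = 𝒞 (t i) }

/-- The basic set `[n, a]` of the preorder with approximations `(ᵂA, ≤)`. -/
def Approx (I : ∀ n, F n → (Fin n → A) → A) (n : ℕ) (a : ℕ → A) : Set (ℕ → A) :=
  { b | SeqReduction I b a ∧ ∀ i < n, b i = a i }

/-- The natural topology on `ᵂA`, generated by the sets `[n, a]`. -/
def natTop (I : ∀ n, F n → (Fin n → A) → A) : TopologicalSpace (ℕ → A) :=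
  TopologicalSpace.generateFrom { S | ∃ n a, S = Approx I n a }

/-- A subset `X ⊆ ᵂA` is Ramsey. -/
def RamseySet (I : ∀ n, F n → (Fin n → A) → A) (X : Set (ℕ → A)) : Prop :=
  ∀ (n : ℕ) (a : ℕ → A), ∃ b ∈ Approx I n a,
    Approx I n b ⊆ X ∨ Approx I n b ∩ X = ∅

/-- `X` has the property of Baire in the natural topology:
its symmetric difference with some open set is meager. -/
def HasBaireProperty (I : ∀ n, F n → (Fin n → A) → A) (X : Set (ℕ → A)) : Prop :=
  ∃ U : Set (ℕ → A), @IsOpen _ (natTop I) U ∧ @IsMeagre _ (natTop I) (symmDiff X U)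

end General

/-- The language with a single binary function symbol. -/
inductive BinF : ℕ → Type
  | f : BinF 2

/-- Application of the binary function symbol: the term `f s t`. -/
def fapp (s t : Tm BinF) : Tm BinF := .func BinF.f ![s, t]

/-- The interpretation of the single binary function symbol by a binary
operation `g` on `A`. -/
def binI {A : Type v} (g : A → A → A) : ∀ n, BinF n → (Fin n → A) → A
  | _, BinF.f, args => g (args 0) (args 1)

/-- The pair `(tˣ, tʸ)`: `(vᵢˣ, vᵢʸ) = (v_{2i}, v_{2i+1})` and
`((f s t)ˣ, (f s t)ʸ) = (f sˣ sʸ, f tˣ tʸ)`. -/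
def xyPair : Tm BinF → Tm BinF × Tm BinF
  | .var i => (.var (2 * i), .var (2 * i + 1))
  | .func BinF.f ts =>
      (fapp (xyPair (ts 0)).1 (xyPair (ts 0)).2, fapp (xyPair (ts 1)).1 (xyPair (ts 1)).2)

/-- The orderly algebra `♯𝒜`, `♯𝒜(t) = (𝒜(tˣ), 𝒜(tʸ))`. -/
def sharpOA {β : Type w} (𝒜 : Tm BinF → β) : Tm BinF → β × β :=
  fun t => (𝒜 (xyPair t).1, 𝒜 (xyPair t).2)
/-! ### Auxiliary development -/

section Aux

namespace Tm

variable {F : ℕ → Type u} {A : Type v}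

theorem varList_subst (σ : ℕ → Tm F) (t : Tm F) :
    (t.subst σ).varList = t.varList.flatMap fun i => (σ i).varList := by
  induction t with
  | var i => simp [subst, varList]
  | func f ts ih =>
    simp only [subst, varList, List.flatMap_assoc]
    exact List.flatMap_congr fun i _ => ih i

theorem realize_subst (I : ∀ n, F n → (Fin n → A) → A) (a : ℕ → A) (σ : ℕ → Tm F)
    (t : Tm F) :
    (t.subst σ).realize I a = t.realize I fun i => (σ i).realize I a := by
  induction t with
  | var i => rfl
  | func f ts ih =>
    simp only [subst, realize]
    exact congrArg _ (funext fun i => ih i)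

theorem subst_subst (σ τ : ℕ → Tm F) (t : Tm F) :
    (t.subst σ).subst τ = t.subst fun i => (σ i).subst τ := by
  induction t with
  | var i => rfl
  | func f ts ih =>
    simp only [subst]
    exact congrArg _ (funext fun i => ih i)

theorem subst_ext {σ τ : ℕ → Tm F} {t : Tm F} (h : ∀ i ∈ t.varList, σ i = τ i) :
    t.subst σ = t.subst τ := by
  induction t with
  | var i => exact h i (by simp [varList])
  | func f ts ih =>
    simp only [subst]
    refine congrArg _ (funext fun i => ih i fun j hj => h j ?_)
    simp only [varList, List.mem_flatMap]
    exact ⟨i, List.mem_finRange i, hj⟩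

theorem realize_ext (I : ∀ n, F n → (Fin n → A) → A) {a b : ℕ → A} {t : Tm F}
    (h : ∀ i ∈ t.varList, a i = b i) :
    t.realize I a = t.realize I b := by
  induction t with
  | var i => exact h i (by simp [varList])
  | func f ts ih =>
    simp only [realize]
    refine congrArg _ (funext fun i => ih i fun j hj => h j ?_)
    simp only [varList, List.mem_flatMap]
    exact ⟨i, List.mem_finRange i, hj⟩

theorem varList_ne_nil (t : Tm BinF) : t.varList ≠ [] := by
  induction t with
  | var i => simp [varList]
  | func f ts ih =>
    cases f
    have h0 := ih 0
    simp only [varList]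
    intro hcon
    rw [show (List.finRange 2) = [0, 1] from rfl] at hcon
    simp only [List.flatMap_cons, List.flatMap_nil, List.append_nil,
      List.append_eq_nil_iff] at hcon
    exact h0 hcon.1

end Tm

set_option linter.constructorNameAsVariable false

/-- All elements of `l₁` are less than all elements of `l₂`. -/
def AllLT (l₁ l₂ : List ℕ) : Prop := ∀ x ∈ l₁, ∀ y ∈ l₂, x < y

theorem AllLT.trans' {l₁ l₂ l₃ : List ℕ} (h12 : AllLT l₁ l₂) (h23 : AllLT l₂ l₃)
    (hne : l₂ ≠ []) : AllLT l₁ l₃ := by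
  obtain ⟨y, hy⟩ := List.exists_mem_of_ne_nil l₂ hne
  exact fun x hx z hz => (h12 x hx y hy).trans (h23 y hy z hz)

theorem orderly_iff {t : Tm F'} : t.Orderly ↔ t.varList.Pairwise (· < ·) :=
  List.isChain_iff_pairwise
  
theorem pairwise_le_getLast {l : List ℕ} (h : l.Pairwise (· < ·)) :
    ∀ {x i : ℕ}, x ∈ l → l.getLast? = some i → x ≤ i := by
  induction l with
  | nil => simp
  | cons a l ih =>
    intro x i hx hi
    rcases List.mem_cons.1 hx with rfl | hx'
    · cases l with
      | nil => simp_all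
      | cons b l' =>
        rw [List.getLast?_cons_cons] at hi
        have hmem : i ∈ b :: l' := by
          have : (b :: l').getLast (by simp) = i := by
            have := List.getLast?_eq_getLast (l := b :: l') (by simp)
            rw [this] at hi; exact Option.some_injective _ hi
          rw [← this]; exact List.getLast_mem _
        exact le_of_lt ((List.pairwise_cons.1 h).1 i hmem)
    · cases l with
      | nil => simp at hx'
      | cons b l' =>
        rw [List.getLast?_cons_cons] at hi
        exact ih (List.pairwise_cons.1 h).2 hx' hi

theorem pairwise_head_le {l : List ℕ} (h : l.Pairwise (· < ·)) :
    ∀ {x j : ℕ}, x ∈ l → l.head? = some j → j ≤ x := by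
  induction l with
  | nil => simp
  | cons a l ih =>
    intro x j hx hj
    simp only [List.head?_cons, Option.some.injEq] at hj
    subst hj
    rcases List.mem_cons.1 hx with rfl | hx'
    · exact le_refl _
    · exact le_of_lt ((List.pairwise_cons.1 h).1 x hx')

theorem termLT_of_allLT {s t : Tm BinF} (h : AllLT s.varList t.varList) :
    Tm.TermLT s t := by
  have hs := Tm.varList_ne_nil s
  have ht := Tm.varList_ne_nil t
  refine ⟨s.varList.getLast hs, t.varList.head ht,
    List.getLast?_eq_getLast hs, List.head?_eq_head ht, ?_⟩
  exact h _ (List.getLast_mem hs) _ (List.head_mem ht)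

theorem allLT_of_termLT {s t : Tm BinF} (hs : s.Orderly) (ht : t.Orderly)
    (h : Tm.TermLT s t) : AllLT s.varList t.varList := by
  obtain ⟨i, j, hi, hj, hij⟩ := h
  intro x hx y hy
  calc x ≤ i := pairwise_le_getLast (orderly_iff.1 hs) hx hi
    _ < j := hij
    _ ≤ y := pairwise_head_le (orderly_iff.1 ht) hy hj

theorem admissible_allLT {u : ℕ → Tm BinF} (hu : Tm.Admissible u) {i j : ℕ}
    (hij : i < j) : AllLT (u i).varList (u j).varList := by
  obtain ⟨d, rfl⟩ : ∃ d, j = i + d + 1 := ⟨j - i - 1, by omega⟩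
  clear hij
  induction d with
  | zero => exact allLT_of_termLT (hu.1 i) (hu.1 (i+1)) (hu.2 i)
  | succ d ih =>
    have h2 : AllLT (u (i+d+1)).varList (u (i+d+2)).varList :=
      allLT_of_termLT (hu.1 _) (hu.1 _) (hu.2 (i+d+1))
    exact AllLT.trans' ih (by convert h2 using 3 <;> omega)
      (Tm.varList_ne_nil _)

theorem admissible_var_ge {u : ℕ → Tm BinF} (hu : Tm.Admissible u) :
    ∀ (i : ℕ) (x : ℕ), x ∈ (u i).varList → i ≤ x := by
  intro i
  induction i with
  | zero => exact fun x _ => Nat.zero_le x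
  | succ i ih =>
    intro x hx
    obtain ⟨y, hy⟩ := List.exists_mem_of_ne_nil _ (Tm.varList_ne_nil (u i))
    have : y < x := admissible_allLT hu (Nat.lt_succ_self i) y hy x hx
    exact Nat.succ_le_of_lt (lt_of_le_of_lt (ih y hy) this)

theorem pairwise_flatMap {l : List ℕ} {f : ℕ → List ℕ}
    (h1 : ∀ i ∈ l, (f i).Pairwise (· < ·))
    (h2 : l.Pairwise fun i j => AllLT (f i) (f j)) :
    (l.flatMap f).Pairwise (· < ·) := by
  induction l with
  | nil => simp
  | cons a l ih =>
    simp only [List.flatMap_cons]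
    rw [List.pairwise_append]
    refine ⟨h1 a (by simp), ih (fun i hi => h1 i (by simp [hi]))
      (List.pairwise_cons.1 h2).2, ?_⟩
    intro x hx y hy
    obtain ⟨b, hb, hyb⟩ := List.mem_flatMap.1 hy
    exact (List.pairwise_cons.1 h2).1 b hb x hx y hyb

theorem subst_orderly {t : Tm BinF} {u : ℕ → Tm BinF} (ht : t.Orderly)
    (hu : Tm.Admissible u) : (t.subst u).Orderly := by
  rw [orderly_iff, Tm.varList_subst]
  exact pairwise_flatMap (fun i _ => orderly_iff.1 (hu.1 i))
    ((orderly_iff.1 ht).imp_of_mem fun ha hb hab => admissible_allLT hu hab)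

theorem subst_allLT {s t : Tm BinF} {u : ℕ → Tm BinF}
    (h : AllLT s.varList t.varList) (hu : Tm.Admissible u) :
    AllLT (s.subst u).varList (t.subst u).varList := by
  intro x hx y hy
  rw [Tm.varList_subst] at hx hy
  obtain ⟨i, hi, hxi⟩ := List.mem_flatMap.1 hx
  obtain ⟨j, hj, hyj⟩ := List.mem_flatMap.1 hy
  exact admissible_allLT hu (h i hi j hj) x hxi y hyj

theorem admissible_comp {v u : ℕ → Tm BinF} (hv : Tm.Admissible v)
    (hu : Tm.Admissible u) : Tm.Admissible fun i => (v i).subst u := by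
  refine ⟨fun i => subst_orderly (hv.1 i) hu, fun i => ?_⟩
  exact termLT_of_allLT (subst_allLT
    (allLT_of_termLT (hv.1 i) (hv.1 (i+1)) (hv.2 i)) hu)

theorem admissible_var {f : ℕ → ℕ} (hf : StrictMono f) :
    Tm.Admissible fun i => (Tm.var (f i) : Tm BinF) := by
  constructor
  · intro i; simp [Tm.Orderly, Tm.varList, List.Chain']
  · intro i
    exact ⟨f i, f (i+1), rfl, rfl, hf (Nat.lt_succ_self i)⟩

section Red

variable {A : Type v} {I : ∀ n, BinF n → (Fin n → A) → A}

theorem seqRed_refl (a : ℕ → A) : SeqReduction I a a :=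
  ⟨fun i => .var i, admissible_var strictMono_id, fun _ => rfl⟩

theorem seqRed_trans {c b a : ℕ → A} (h1 : SeqReduction I c b)
    (h2 : SeqReduction I b a) : SeqReduction I c a := by
  obtain ⟨t, ht, hct⟩ := h1
  obtain ⟨u, hu, hbu⟩ := h2
  refine ⟨fun i => (t i).subst u, admissible_comp ht hu, fun i => ?_⟩
  rw [hct i, Tm.realize_subst]
  exact Tm.realize_ext I fun j _ => hbu j

theorem FR_mono {b a : ℕ → A} (h : SeqReduction I b a) : FR I b ⊆ FR I a := by
  rintro x ⟨t, ht, rfl⟩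
  obtain ⟨u, hu, hbu⟩ := h
  refine ⟨t.subst u, subst_orderly ht hu, ?_⟩
  rw [Tm.realize_subst]
  exact Tm.realize_ext I fun j _ => hbu j

theorem mem_FR_tail {b : ℕ → A} {q : Tm BinF} (hq : q.Orderly)
    {k : ℕ} (hk : ∀ v ∈ q.varList, k ≤ v) :
    q.realize I b ∈ FR I fun m => b (m + k) := by
  refine ⟨q.subst fun i => .var (i - k), ?_, ?_⟩
  · rw [orderly_iff, Tm.varList_subst]
    have : (q.varList.flatMap fun i => ((Tm.var (i - k) : Tm BinF)).varList)
        = q.varList.map fun i => i - k := by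
      simp only [Tm.varList]
      induction q.varList with
      | nil => rfl
      | cons a l ih => simp [ih]
    rw [this, List.pairwise_map]
    exact (orderly_iff.1 hq).imp_of_mem fun ha hb hab => by
      have := hk _ ha; omega
  · rw [Tm.realize_subst]
    refine (Tm.realize_ext I fun i hi => ?_).symm
    show b (i - k + k) = b i
    congr 1
    have := hk _ hi; omega

end Red

theorem varList_fapp (s t : Tm BinF) :
    (fapp s t).varList = s.varList ++ t.varList := by
  show ((List.finRange 2).flatMap fun i => (![s, t] i).varList) = _
  rw [show (List.finRange 2) = [0, 1] from rfl]
  simp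

theorem func_eq_fapp (ts : Fin 2 → Tm BinF) :
    Tm.func BinF.f ts = fapp (ts 0) (ts 1) := by
  show _ = Tm.func BinF.f ![ts 0, ts 1]
  congr 1
  funext i
  fin_cases i <;> rfl

theorem orderly_fapp {s t : Tm BinF} (hs : s.Orderly) (ht : t.Orderly)
    (hst : AllLT s.varList t.varList) : (fapp s t).Orderly := by
  rw [orderly_iff, varList_fapp, List.pairwise_append]
  exact ⟨orderly_iff.1 hs, orderly_iff.1 ht, hst⟩

theorem orderly_fapp_elim {s t : Tm BinF} (h : (fapp s t).Orderly) :
    s.Orderly ∧ t.Orderly ∧ AllLT s.varList t.varList := by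
  rw [orderly_iff, varList_fapp, List.pairwise_append] at h
  exact ⟨orderly_iff.2 h.1, orderly_iff.2 h.2.1, h.2.2⟩

/-- Approximating sets of terms, used to prove finiteness. -/
def termSet (n : ℕ) : ℕ → Set (Tm BinF)
  | 0 => ∅
  | k + 1 => (fun i => Tm.var i) '' {i | i ≤ n} ∪
      Set.image2 fapp (termSet n k) (termSet n k)

theorem termSet_finite (n k : ℕ) : (termSet n k).Finite := by
  induction k with
  | zero => exact Set.finite_empty
  | succ k ih =>
    exact ((Set.finite_Iic n).image _).union (Set.Finite.image2 _ ih ih)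

theorem termSet_subset (n : ℕ) : ∀ {k m : ℕ}, k ≤ m → termSet n k ⊆ termSet n m := by
  have mono : ∀ k, termSet n k ⊆ termSet n (k + 1) := by
    intro k
    induction k with
    | zero => simp [termSet]
    | succ k ih =>
      exact Set.union_subset (Set.subset_union_left)
        ((Set.image2_subset ih ih).trans Set.subset_union_right)
  intro k m hkm
  induction hkm with
  | refl => exact fun _ h => h
  | step h ih => exact fun t ht => mono _ (ih ht)

theorem mem_termSet {t : Tm BinF} (ht : t.Orderly) {n : ℕ}
    (hn : ∀ v ∈ t.varList, v ≤ n) : t ∈ termSet n t.varList.length := by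
  induction t with
  | var i =>
    exact Set.mem_union_left _ ⟨i, hn i (by simp [Tm.varList]), rfl⟩
  | func f ts ih =>
    cases f
    rw [func_eq_fapp] at ht hn ⊢
    obtain ⟨h0, h1, _⟩ := orderly_fapp_elim ht
    rw [varList_fapp] at hn ⊢
    have hn0 : ∀ v ∈ (ts 0).varList, v ≤ n := fun v hv => hn v (by simp [hv])
    have hn1 : ∀ v ∈ (ts 1).varList, v ≤ n := fun v hv => hn v (by simp [hv])
    have m0 := ih 0 h0 hn0
    have m1 := ih 1 h1 hn1
    have l0 := List.length_pos_iff.2 (Tm.varList_ne_nil (ts 0))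
    have l1 := List.length_pos_iff.2 (Tm.varList_ne_nil (ts 1))
    rw [List.length_append]
    obtain ⟨m, hm⟩ : ∃ m, (ts 0).varList.length + (ts 1).varList.length = m + 1 :=
      ⟨(ts 0).varList.length + (ts 1).varList.length - 1, by omega⟩
    rw [hm]
    show fapp (ts 0) (ts 1) ∈
      (fun i => Tm.var i) '' {i | i ≤ n} ∪ Set.image2 fapp (termSet n m) (termSet n m)
    refine Set.mem_union_right _ (Set.mem_image2.2 ⟨ts 0, ?_, ts 1, ?_, rfl⟩)
    · exact termSet_subset n (by omega) m0
    · exact termSet_subset n (by omega) m1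

theorem orderly_length_le {t : Tm BinF} (ht : t.Orderly) {n : ℕ}
    (hn : ∀ v ∈ t.varList, v ≤ n) : t.varList.length ≤ n + 1 := by
  have hnd : t.varList.Nodup := (orderly_iff.1 ht).imp fun h => Nat.ne_of_lt h
  have hsub : t.varList.toFinset ⊆ Finset.range (n + 1) := by
    intro x hx
    simp only [List.mem_toFinset] at hx
    exact Finset.mem_range.2 (Nat.lt_succ_of_le (hn x hx))
  calc t.varList.length = t.varList.toFinset.card := (List.toFinset_card_of_nodup hnd).symm
    _ ≤ (Finset.range (n + 1)).card := Finset.card_le_card hsub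
    _ = n + 1 := Finset.card_range _

theorem orderlyBounded_finite (n : ℕ) :
    {t : Tm BinF | t.Orderly ∧ ∀ v ∈ t.varList, v ≤ n}.Finite := by
  apply (termSet_finite n (n + 1)).subset
  rintro t ⟨ht, hn⟩
  exact termSet_subset n (orderly_length_le ht hn) (mem_termSet ht hn)

section Steps

variable {A : Type v} {I : ∀ n, BinF n → (Fin n → A) → A}

theorem valueSet_finite (d : ℕ → A) (n : ℕ) :
    {x : A | ∃ p : Tm BinF, p.Orderly ∧ (∀ v ∈ p.varList, v ≤ n) ∧
      p.realize I d = x}.Finite := by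
  apply ((orderlyBounded_finite n).image fun t => t.realize I d).subset
  rintro x ⟨p, h1, h2, rfl⟩
  exact ⟨p, ⟨h1, h2⟩, rfl⟩

theorem steps (hg : RamseyAlg I) (X : Set (A × A)) {S : Set A} (hS : S.Finite) :
    ∀ d : ℕ → A, ∃ e, SeqReduction I e d ∧
      ∀ x ∈ S, (∀ y ∈ FR I e, (x, y) ∈ X) ∨ (∀ y ∈ FR I e, (x, y) ∉ X) := by
  refine Set.Finite.induction_on S hS (fun d => ⟨d, seqRed_refl d, by simp⟩) ?_
  clear hS S
  intro x S hx hS ih d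
  obtain ⟨e₁, he₁, hprop⟩ := ih d
  obtain ⟨e, he, hcase⟩ := hg e₁ {y | (x, y) ∈ X}
  refine ⟨e, seqRed_trans he he₁, fun x' hx' => ?_⟩
  rcases Set.mem_insert_iff.1 hx' with rfl | hmem
  · rcases hcase with hsub | hdisj
    · exact Or.inl fun y hy => hsub hy
    · exact Or.inr fun y hy hXy =>
        (Set.eq_empty_iff_forall_notMem.1 hdisj y) ⟨hy, hXy⟩
  · rcases hprop x' hmem with h | h
    · exact Or.inl fun y hy => h y (FR_mono he hy)
    · exact Or.inr fun y hy => h y (FR_mono he hy)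

end Steps

theorem foldr_max_le (l : List ℕ) : ∀ x ∈ l, x ≤ l.foldr max 0 := by
  induction l with
  | nil => simp
  | cons a l ih =>
    intro x hx
    rcases List.mem_cons.1 hx with rfl | hx'
    · exact le_max_left _ _
    · exact le_trans (ih x hx') (le_max_right _ _)

theorem foldr_max_mem (l : List ℕ) (h : l ≠ []) : l.foldr max 0 ∈ l := by
  induction l with
  | nil => simp at h
  | cons a l ih =>
    cases l with
    | nil => simp
    | cons b l' =>
      rcases max_choice a ((b :: l').foldr max 0) with hc | hc
    
      · simp only [List.foldr_cons] at hc ⊢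
        rw [hc]; exact List.mem_cons_self
      · simp only [List.foldr_cons] at hc ⊢
        rw [hc]
        exact List.mem_cons_of_mem _ (ih (by simp))

section PairRamsey

variable {A : Type v} {I : ∀ n, BinF n → (Fin n → A) → A}

/-- The (finite) set of values of orderly terms with variables among `v₀,…,vₙ`. -/
def Fset (I : ∀ n, BinF n → (Fin n → A) → A) (d : ℕ → A) (n : ℕ) : Set A :=
  {x | ∃ p : Tm BinF, p.Orderly ∧ (∀ v ∈ p.varList, v ≤ n) ∧ p.realize I d = x}

theorem Fset_finite (d : ℕ → A) (n : ℕ) : (Fset I d n).Finite :=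
  valueSet_finite d n

/-- One step of the fusion construction: fix the first `n+1` terms and
homogenize the tail with respect to every value in `Fset`. -/
theorem step_ex (hg : RamseyAlg I) (X : Set (A × A)) (a' : ℕ → A)
    (sn : ℕ → Tm BinF) (hsn : Tm.Admissible sn) (n : ℕ) :
    ∃ s' : ℕ → Tm BinF, Tm.Admissible s' ∧ (∀ i ≤ n, s' i = sn i) ∧
      (∃ u : ℕ → Tm BinF, Tm.Admissible u ∧ (∀ i ≤ n, u i = Tm.var i) ∧
        ∀ j, s' j = (u j).subst sn) ∧
      (∀ x ∈ Fset I (fun i => (sn i).realize I a') n,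
        (∀ y ∈ FR I fun k => (s' (k + (n+1))).realize I a', (x, y) ∈ X) ∨
        (∀ y ∈ FR I fun k => (s' (k + (n+1))).realize I a', (x, y) ∉ X)) := by
  set d : ℕ → A := fun i => (sn i).realize I a' with hd
  obtain ⟨e, ⟨v, hv, hev⟩, hprop⟩ :=
    steps hg X (Fset_finite (I := I) d n) fun k => d (k + (n+1))
  set vsh : ℕ → Tm BinF := fun k => (v k).subst fun i => Tm.var (i + (n+1)) with hvsh
  have hvsh_adm : Tm.Admissible vsh :=
    admissible_comp hv (admissible_var fun x y hxy => by omega)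
  have hvsh_ge : ∀ k, ∀ x ∈ (vsh k).varList, n + 1 ≤ x := by
    intro k x hx
    rw [hvsh, Tm.varList_subst] at hx
    obtain ⟨i, _, hxi⟩ := List.mem_flatMap.1 hx
    simp only [Tm.varList, List.mem_singleton] at hxi
    omega
  set u : ℕ → Tm BinF := fun j => if j ≤ n then Tm.var j else vsh (j - (n+1)) with hu
  have hu_adm : Tm.Admissible u := by
    constructor
    · intro j
      simp only [hu]
      split_ifs
      · simp [Tm.Orderly, Tm.varList, List.Chain']
      · exact hvsh_adm.1 _
    · intro j
      rcases lt_trichotomy j n with hj | rfl | hj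
      · have e1 : u j = Tm.var j := by
          simp only [hu]; rw [if_pos (by omega)]
        have e2 : u (j+1) = Tm.var (j+1) := by
          simp only [hu]; rw [if_pos (by omega)]
        rw [e1, e2]
        exact ⟨j, j+1, rfl, rfl, Nat.lt_succ_self j⟩
      · have e1 : u j = Tm.var j := by
          simp only [hu]; rw [if_pos (by omega)]
        have e2 : u (j+1) = vsh 0 := by
          simp only [hu]; rw [if_neg (by omega), Nat.sub_self]
        rw [e1, e2]
        refine termLT_of_allLT ?_
        intro x hx y hy
        simp only [Tm.varList, List.mem_singleton] at hx
        subst hx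
        have := hvsh_ge 0 y hy
        omega
      · have e1 : u j = vsh (j - (n+1)) := by
          simp only [hu]; rw [if_neg (by omega)]
        have e2 : u (j+1) = vsh (j - n) := by
          simp only [hu]; rw [if_neg (by omega)]
          congr 1
          omega
        rw [e1, e2]
        have : j - n = (j - (n+1)) + 1 := by omega
        rw [this]
        exact hvsh_adm.2 _
  refine ⟨fun j => (u j).subst sn, admissible_comp hu_adm hsn, ?_, ⟨u, hu_adm, ?_, fun j => rfl⟩, ?_⟩
  · intro i hi
    simp only [hu]
    rw [if_pos hi]
    rfl
  · intro i hi
    simp only [hu]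
    rw [if_pos hi]
  · have htail : (fun k => (((u (k + (n+1))).subst sn)).realize I a') = e := by
      funext k
    
      have e1 : u (k + (n+1)) = vsh k := by
        simp only [hu]
        rw [if_neg (by omega)]
        congr 1
        omega
      rw [e1, hvsh, Tm.subst_subst, Tm.realize_subst, hev k]
      apply Tm.realize_ext
      intro i _
      show ((Tm.var (i + (n+1)) : Tm BinF).subst sn).realize I a' = d (i + (n+1))
      rfl
    rw [htail]
    exact hprop

variable (hg : RamseyAlg I) (X : Set (A × A)) (a' : ℕ → A)

/-- The fusion sequence of admissible term sequences. -/
noncomputable def stage : ℕ → {s : ℕ → Tm BinF // Tm.Admissible s}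
  | 0 => ⟨fun i => Tm.var i, admissible_var strictMono_id⟩
  | n + 1 =>
    ⟨Classical.choose (step_ex hg X a' (stage n).1 (stage n).2 n),
     (Classical.choose_spec (step_ex hg X a' (stage n).1 (stage n).2 n)).1⟩

theorem stage_spec (n : ℕ) :
    (∀ i ≤ n, (stage hg X a' (n+1)).1 i = (stage hg X a' n).1 i) ∧
    (∃ u : ℕ → Tm BinF, Tm.Admissible u ∧ (∀ i ≤ n, u i = Tm.var i) ∧
      ∀ j, (stage hg X a' (n+1)).1 j = (u j).subst (stage hg X a' n).1) ∧
    (∀ x ∈ Fset I (fun i => ((stage hg X a' n).1 i).realize I a') n,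
      (∀ y ∈ FR I fun k => ((stage hg X a' (n+1)).1 (k + (n+1))).realize I a',
        (x, y) ∈ X) ∨
      (∀ y ∈ FR I fun k => ((stage hg X a' (n+1)).1 (k + (n+1))).realize I a',
        (x, y) ∉ X)) :=
  (Classical.choose_spec (step_ex hg X a' (stage hg X a' n).1 (stage hg X a' n).2 n)).2

/-- The diagonal (fused) sequence of terms. -/
noncomputable def sInf : ℕ → Tm BinF := fun j => (stage hg X a' j).1 j

theorem stage_agree : ∀ m j, j ≤ m → (stage hg X a' m).1 j = sInf hg X a' j := by
  intro m
  induction m with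
  | zero =>
    intro j hj
    interval_cases j
    rfl
  | succ m ih =>
    intro j hj
    rcases Nat.lt_or_ge j (m+1) with h | h
    · rw [(stage_spec hg X a' m).1 j (by omega)]
      exact ih j (by omega)
    · have hjm : j = m + 1 := by omega
      subst hjm
      rfl

theorem sInf_admissible : Tm.Admissible (sInf hg X a') := by
  constructor
  · intro j
    exact (stage hg X a' j).2.1 j
  · intro j
    have h1 : (stage hg X a' (j+1)).1 j = sInf hg X a' j :=
      stage_agree hg X a' (j+1) j (by omega)
    have h2 : (stage hg X a' (j+1)).1 (j+1) = sInf hg X a' (j+1) := rfl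
    rw [← h1, ← h2]
    exact (stage hg X a' (j+1)).2.2 j

theorem stage_comp {n m : ℕ} (hnm : n ≤ m) :
    ∃ u : ℕ → Tm BinF, Tm.Admissible u ∧ (∀ i ≤ n, u i = Tm.var i) ∧
      ∀ j, (stage hg X a' m).1 j = (u j).subst (stage hg X a' n).1 := by
  induction m, hnm using Nat.le_induction with
  | base =>
    exact ⟨fun i => Tm.var i, admissible_var strictMono_id, fun i _ => rfl,
      fun j => rfl⟩
  | succ m hnm ih =>
    obtain ⟨u, hu, huvar, hueq⟩ := ih
    obtain ⟨u', hu', hu'var, hu'eq⟩ := (stage_spec hg X a' m).2.1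
    refine ⟨fun j => (u' j).subst u, admissible_comp hu' hu, ?_, ?_⟩
    · intro i hi
      show Tm.subst u (u' i) = Tm.var i
      rw [hu'var i (le_trans hi hnm)]
      exact huvar i hi
    · intro j
      rw [hu'eq j, Tm.subst_subst]
      have : (stage hg X a' m).1 = fun i => (u i).subst (stage hg X a' n).1 :=
        funext hueq
      rw [this]

/-- The fused sequence in `A`. -/
noncomputable def dInf : ℕ → A := fun j => ((sInf hg X a' j).realize I a')

/-- The stable homogeneous side for `x` at level `m`. -/
def EpsP (m : ℕ) (x : A) : Prop :=
  ∀ y ∈ FR I fun k => (((stage hg X a' (m+1)).1 (k + (m+1))).realize I a'),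
    (x, y) ∈ X

theorem pair_lemma (m : ℕ) {p q : Tm BinF} (hp : p.Orderly) (hq : q.Orderly)
    (hpm : ∀ v ∈ p.varList, v ≤ m) (hqm : ∀ v ∈ q.varList, m + 1 ≤ v) :
    ((p.realize I (dInf hg X a'), q.realize I (dInf hg X a')) ∈ X ↔
      EpsP hg X a' m (p.realize I (dInf hg X a'))) := by
  set dI := dInf hg X a' with hdinf
  set x := p.realize I dI with hx
  -- `x` belongs to the `Fset` at level `m`
  have hxF : x ∈ Fset I (fun i => ((stage hg X a' m).1 i).realize I a') m := by
    refine ⟨p, hp, hpm, ?_⟩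
    apply Tm.realize_ext
    intro v hv
    show ((stage hg X a' m).1 v).realize I a' = dI v
    rw [stage_agree hg X a' m v (hpm v hv)]
    rfl
  have verdict := (stage_spec hg X a' m).2.2 x hxF
  -- `y` belongs to the `FR` of the tail at level `m+1`
  set y := q.realize I dI with hy
  have hyFR : y ∈ FR I fun k => (((stage hg X a' (m+1)).1 (k + (m+1))).realize I a') := by
    have hqne := Tm.varList_ne_nil q
    set M := q.varList.foldr max 0 with hM
    have hMge : ∀ v ∈ q.varList, v ≤ M := foldr_max_le q.varList
    have hmM : m + 1 ≤ M := by
      obtain ⟨v, hv⟩ := List.exists_mem_of_ne_nil _ hqne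
      exact le_trans (hqm v hv) (hMge v hv)
    obtain ⟨u, hu, huvar, hueq⟩ := stage_comp hg X a' hmM
    set q' := q.subst u with hq'
    have hq'_ord : q'.Orderly := subst_orderly hq hu
    have hq'_ge : ∀ v ∈ q'.varList, m + 1 ≤ v := by
      intro v hv
      rw [hq', Tm.varList_subst] at hv
      obtain ⟨j, hj, hvj⟩ := List.mem_flatMap.1 hv
      exact le_trans (hqm j hj) (admissible_var_ge hu j v hvj)
    have heval : y = q'.realize I fun i => ((stage hg X a' (m+1)).1 i).realize I a' := by
      rw [hy, hq', Tm.realize_subst]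
      apply Tm.realize_ext
      intro j hj
      show dI j = (u j).realize I fun i => ((stage hg X a' (m+1)).1 i).realize I a'
      rw [← Tm.realize_subst, ← hueq j]
      show dI j = ((stage hg X a' M).1 j).realize I a'
      rw [stage_agree hg X a' M j (hMge j hj)]
      rfl
    rw [heval]
    have := mem_FR_tail (I := I)
      (b := fun i => ((stage hg X a' (m+1)).1 i).realize I a') hq'_ord hq'_ge
    exact this
  constructor
  · intro hXxy
    rcases verdict with hpos | hneg
    · exact hpos
    · exact absurd hXxy (hneg y hyFR)
  · intro heps
    exact heps y hyFR

theorem eps_indep {m m' : ℕ} {p p' : Tm BinF} (hp : p.Orderly) (hp' : p'.Orderly)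
    (hpm : ∀ v ∈ p.varList, v ≤ m) (hpm' : ∀ v ∈ p'.varList, v ≤ m')
    (heq : p.realize I (dInf hg X a') = p'.realize I (dInf hg X a')) :
    (EpsP hg X a' m (p.realize I (dInf hg X a')) ↔
      EpsP hg X a' m' (p.realize I (dInf hg X a'))) := by
  set L := max m m' + 1 with hL
  have hq : (Tm.var L : Tm BinF).Orderly := by simp [Tm.Orderly, Tm.varList, List.Chain']
  have hqm : ∀ v ∈ (Tm.var L : Tm BinF).varList, m + 1 ≤ v := by
    intro v hv
    simp only [Tm.varList, List.mem_singleton] at hv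
    omega
  have hqm' : ∀ v ∈ (Tm.var L : Tm BinF).varList, m' + 1 ≤ v := by
    intro v hv
    simp only [Tm.varList, List.mem_singleton] at hv
    omega
  have h1 := (pair_lemma hg X a' m hp hq hpm hqm).symm
  have h2 := pair_lemma hg X a' m' hp' hq hpm' hqm'
  rw [← heq] at h2
  exact h1.trans h2

include hg in
/-- The pair-Ramsey property for a Ramsey algebra. -/
theorem pair_ramsey :
    ∃ s : ℕ → Tm BinF, Tm.Admissible s ∧
      ((∀ p q : Tm BinF, p.Orderly → q.Orderly → AllLT p.varList q.varList →
          (p.realize I fun i => (s i).realize I a',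
           q.realize I fun i => (s i).realize I a') ∈ X) ∨
       (∀ p q : Tm BinF, p.Orderly → q.Orderly → AllLT p.varList q.varList →
          (p.realize I fun i => (s i).realize I a',
           q.realize I fun i => (s i).realize I a') ∉ X)) := by
  classical
  set dI := dInf hg X a' with hdinf
  set Xχ : Set A := {x | ∃ (m : ℕ) (p : Tm BinF), p.Orderly ∧
    (∀ v ∈ p.varList, v ≤ m) ∧ p.realize I dI = x ∧ EpsP hg X a' m x} with hXχ
  obtain ⟨b, ⟨w, hw, hbw⟩, hcase⟩ := hg dI Xχ
  have hdb : (fun i => (((w i).subst (sInf hg X a')).realize I a')) = b := by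
    funext i
    rw [Tm.realize_subst, hbw i]
    rfl
  refine ⟨fun i => (w i).subst (sInf hg X a'),
    admissible_comp hw (sInf_admissible hg X a'), ?_⟩
  rw [hdb]
  -- key computation for an arbitrary orderly pair over `b`
  have key : ∀ p q : Tm BinF, p.Orderly → q.Orderly → AllLT p.varList q.varList →
      ∃ (m : ℕ) (P' Q' : Tm BinF), P'.Orderly ∧ Q'.Orderly ∧
        (∀ v ∈ P'.varList, v ≤ m) ∧ (∀ v ∈ Q'.varList, m + 1 ≤ v) ∧
        p.realize I b = P'.realize I dI ∧ q.realize I b = Q'.realize I dI := by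
    intro p q hp hq hpq
    set P' := p.subst w with hP'
    set Q' := q.subst w with hQ'
    have hP'o : P'.Orderly := subst_orderly hp hw
    have hQ'o : Q'.Orderly := subst_orderly hq hw
    have hAll : AllLT P'.varList Q'.varList := subst_allLT hpq hw
    set m := P'.varList.foldr max 0 with hm
    refine ⟨m, P', Q', hP'o, hQ'o, foldr_max_le _, ?_, ?_, ?_⟩
    · intro v hv
      have hmem : m ∈ P'.varList := foldr_max_mem _ (Tm.varList_ne_nil P')
      exact Nat.succ_le_of_lt (hAll m hmem v hv)
    · rw [hP', Tm.realize_subst]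
      apply Tm.realize_ext
      intro j _
      exact hbw j
    · rw [hQ', Tm.realize_subst]
      apply Tm.realize_ext
      intro j _
      exact hbw j
  rcases hcase with hsub | hdisj
  · left
    intro p q hp hq hpq
    obtain ⟨m, P', Q', hP'o, hQ'o, hP'm, hQ'm, hpe, hqe⟩ := key p q hp hq hpq
    rw [hpe, hqe]
    have hmem : p.realize I b ∈ FR I b := ⟨p, hp, rfl⟩
    have hXχmem : p.realize I b ∈ Xχ := hsub hmem
    obtain ⟨m₀, p₀, hp₀, hp₀m, hp₀eq, heps₀⟩ := hXχmem
    rw [hpe] at hp₀eq heps₀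
    have : EpsP hg X a' m (P'.realize I dI) := by
      have hiff := eps_indep hg X a' hp₀ hP'o hp₀m hP'm hp₀eq
      rw [hp₀eq] at hiff
      exact hiff.1 heps₀
    exact (pair_lemma hg X a' m hP'o hQ'o hP'm hQ'm).2 this
  · right
    intro p q hp hq hpq hXmem
    obtain ⟨m, P', Q', hP'o, hQ'o, hP'm, hQ'm, hpe, hqe⟩ := key p q hp hq hpq
    rw [hpe, hqe] at hXmem
    have heps : EpsP hg X a' m (P'.realize I dI) :=
      (pair_lemma hg X a' m hP'o hQ'o hP'm hQ'm).1 hXmem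
    have hXχmem : p.realize I b ∈ Xχ := by
      rw [hpe]
      exact ⟨m, P', hP'o, hP'm, rfl, heps⟩
    have hFRmem : p.realize I b ∈ FR I b := ⟨p, hp, rfl⟩
    exact (Set.eq_empty_iff_forall_notMem.1 hdisj (p.realize I b)) ⟨hFRmem, hXχmem⟩

end PairRamsey

/-- If `(A, g)` is a Ramsey algebra, then so is `(A × A, h)`
where `h((x₁,y₁),(x₂,y₂)) = (g(x₁,y₁), g(x₂,y₂))`. -/
theorem product_algebra_ramsey {A : Type v} (g : A × A → A)
    (h : (A × A) × (A × A) → A × A)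
    (hh : ∀ x₁ y₁ x₂ y₂ : A, h ((x₁, y₁), (x₂, y₂)) = (g (x₁, y₁), g (x₂, y₂)))
    (hg : RamseyAlg (binI fun x y => g (x, y))) :
    RamseyAlg (binI fun p q => h (p, q)) := by
  classical
  intro a X
  set Ig : ∀ n, BinF n → (Fin n → A) → A := binI fun x y => g (x, y) with hIg
  set Ih : ∀ n, BinF n → (Fin n → A × A) → A × A := binI fun p q => h (p, q) with hIh
  set a' : ℕ → A := fun i => g (a i) with ha'
  have hh' : ∀ p q : A × A, h (p, q) = (g p, g q) := by
    intro p q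
    have := hh p.1 p.2 q.1 q.2
    simpa using this
  -- `g` intertwines the two interpretations
  have key1 : ∀ t : Tm BinF, g (t.realize Ih a) = t.realize Ig a' := by
    intro t
    induction t with
    | var i => rfl
    | func f ts ih =>
      cases f
      show g (h ((ts 0).realize Ih a, (ts 1).realize Ih a)) = _
      rw [hh' ((ts 0).realize Ih a) ((ts 1).realize Ih a)]
      show g ((g ((ts 0).realize Ih a), g ((ts 1).realize Ih a))) = _
      rw [ih 0, ih 1]
      rfl
  have key2 : ∀ ts : Fin 2 → Tm BinF, (Tm.func BinF.f ts).realize Ih a =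
      ((ts 0).realize Ig a', (ts 1).realize Ig a') := by
    intro ts
    show h ((ts 0).realize Ih a, (ts 1).realize Ih a) = _
    rw [hh' ((ts 0).realize Ih a) ((ts 1).realize Ih a)]
    rw [key1 (ts 0), key1 (ts 1)]
  obtain ⟨u, hu, hcase⟩ := pair_ramsey hg X a'
  set d : ℕ → A := fun i => (u i).realize Ig a' with hdd
  set s : ℕ → Tm BinF := fun i => fapp (u (2*i)) (u (2*i+1)) with hs
  have hs_adm : Tm.Admissible s := by
    constructor
    · intro i
      exact orderly_fapp (hu.1 _) (hu.1 _) (admissible_allLT hu (by omega))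
    · intro i
      apply termLT_of_allLT
      intro x hx y hy
      have hx' : x ∈ (fapp (u (2*i)) (u (2*i+1))).varList := hx
      have hy' : y ∈ (fapp (u (2*(i+1))) (u (2*(i+1)+1))).varList := hy
      rw [varList_fapp] at hx' hy'
      rcases List.mem_append.1 hx' with h1 | h1 <;>
        rcases List.mem_append.1 hy' with h2 | h2 <;>
        exact admissible_allLT hu (by omega) _ h1 _ h2
  set b : ℕ → A × A := fun i => (s i).realize Ih a with hb
  set τ : ℕ → Tm BinF := fun i => fapp (Tm.var (2*i)) (Tm.var (2*i+1)) with hτ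
  have hτvar : ∀ i, (τ i).varList = [2*i, 2*i+1] := by
    intro i
    show (fapp (Tm.var (2*i)) (Tm.var (2*i+1))).varList = _
    rw [varList_fapp]
    rfl
  have hτ_adm : Tm.Admissible τ := by
    constructor
    · intro i
      rw [Tm.Orderly, hτvar]
      simp [List.Chain']
    · intro i
      apply termLT_of_allLT
      intro x hx y hy
      rw [hτvar] at hx hy
      simp only [List.mem_cons, List.mem_singleton, List.not_mem_nil, or_false] at hx hy
      omega
  have evalS : ∀ p : Tm BinF, (p.subst s).realize Ig a' = (p.subst τ).realize Ig d := by
    intro p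
    rw [Tm.realize_subst, Tm.realize_subst]
    apply Tm.realize_ext
    intro i _
    show (fapp (u (2*i)) (u (2*i+1))).realize Ig a' =
      (fapp (Tm.var (2*i)) (Tm.var (2*i+1))).realize Ig d
    rfl
  -- every element of `FR Ih b` is a `d`-realized orderly pair
  have key3 : ∀ t : Tm BinF, t.Orderly → ∃ p q : Tm BinF, p.Orderly ∧ q.Orderly ∧
      AllLT p.varList q.varList ∧ t.realize Ih b = (p.realize Ig d, q.realize Ig d) := by
    intro t ht
    have hzb : t.realize Ih b = (t.subst s).realize Ih a :=
      (Tm.realize_subst Ih a s t).symm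
    cases t with
    | var i =>
      refine ⟨Tm.var (2*i), Tm.var (2*i+1), by simp [Tm.Orderly, Tm.varList, List.Chain'],
        by simp [Tm.Orderly, Tm.varList, List.Chain'], ?_, ?_⟩
      · intro x hx y hy
        simp only [Tm.varList, List.mem_singleton] at hx hy
        omega
      · rw [hzb]
        show (fapp (u (2*i)) (u (2*i+1))).realize Ih a = _
        rw [show fapp (u (2*i)) (u (2*i+1)) = Tm.func BinF.f ![u (2*i), u (2*i+1)] from rfl,
          key2]
        rfl
    | func f ts =>
      cases f
      have ht' : (fapp (ts 0) (ts 1)).Orderly := by rw [← func_eq_fapp]; exact ht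
      obtain ⟨h0, h1, hall⟩ := orderly_fapp_elim ht'
      refine ⟨(ts 0).subst τ, (ts 1).subst τ, subst_orderly h0 hτ_adm,
        subst_orderly h1 hτ_adm, subst_allLT hall hτ_adm, ?_⟩
      rw [hzb]
      show (Tm.func BinF.f fun i => (ts i).subst s).realize Ih a = _
      rw [key2]
      show ((((ts 0).subst s)).realize Ig a', (((ts 1).subst s)).realize Ig a') = _
      rw [evalS (ts 0), evalS (ts 1)]
  refine ⟨b, ⟨s, hs_adm, fun i => rfl⟩, ?_⟩
  rcases hcase with hpos | hneg
  · left
    rintro z ⟨t, ht, rfl⟩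
    obtain ⟨p, q, hp, hq, hall, heq⟩ := key3 t ht
    rw [heq]
    exact hpos p q hp hq hall
  · right
    rw [Set.eq_empty_iff_forall_notMem]
    rintro z ⟨⟨t, ht, rfl⟩, hzX⟩
    obtain ⟨p, q, hp, hq, hall, heq⟩ := key3 t ht
    rw [heq] at hzX
    exact hneg p q hp hq hall hzX
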